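/- For every ω ∈ ℂ ∖ 𝒞 the following spectral-curve identity holds: G(ω)^2 · G(1/ω)^2 = -1 + G(ω)^2 + G(1/ω)^2 + (2/c) · G(ω) · G(1/ω). -/

import Mathlib

/-- `c = a/(1+a²)`. -/
noncomputable def cOf (a : ℝ) : ℝ := a / (1 + a ^ 2)

/-- The branch of the logarithm with argument in `(-π/2, 3π/2]`:
`L(z) = Log(-iz) + iπ/2` where `Log` is the principal branch. -/
noncomputable def Lbr (z : ℂ) : ℂ :=
  Complex.log (-Complex.I * z) + Complex.I * ((Real.pi : ℂ) / 2)

/-- The branch `√(ω² + 2c) = exp((1/2)L(ω + i√(2c)) + (1/2)L(ω - i√(2c)))`. -/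
noncomputable def sqBr (a : ℝ) (ω : ℂ) : ℂ :=
  Complex.exp ((1 / 2 : ℂ) * Lbr (ω + Complex.I * (Real.sqrt (2 * cOf a) : ℂ)) +
    (1 / 2 : ℂ) * Lbr (ω - Complex.I * (Real.sqrt (2 * cOf a) : ℂ)))

/-- `G(ω) = (ω - √(ω² + 2c))/√(2c)`. -/
noncomputable def Gbr (a : ℝ) (ω : ℂ) : ℂ :=
  (ω - sqBr a ω) / (Real.sqrt (2 * cOf a) : ℂ)

/-- The branch cuts `𝒞 = i·((-∞, -1/√(2c)] ∪ [-√(2c), √(2c)] ∪ [1/√(2c), ∞))`. -/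
def cuts (a : ℝ) : Set ℂ :=
  {z : ℂ | ∃ t : ℝ, z = Complex.I * (t : ℂ) ∧
    (t ≤ -(1 / Real.sqrt (2 * cOf a)) ∨
      (-Real.sqrt (2 * cOf a) ≤ t ∧ t ≤ Real.sqrt (2 * cOf a)) ∨
      1 / Real.sqrt (2 * cOf a) ≤ t)}

lemma exp_Lbr (z : ℂ) (hz : z ≠ 0) : Complex.exp (Lbr z) = z := by
  unfold Lbr
  rw [Complex.exp_add, Complex.exp_log (by simpa using hz)]
  have h2 : Complex.exp (Complex.I * ((Real.pi : ℂ) / 2)) = Complex.I := by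
    rw [mul_comm, Complex.exp_mul_I]
    simp
  rw [h2]; ring_nf; rw [Complex.I_sq]; ring

lemma sqBr_sq (a : ℝ) (ω : ℂ) (hc : 0 ≤ cOf a)
    (h1 : ω + Complex.I * (Real.sqrt (2 * cOf a) : ℂ) ≠ 0)
    (h2 : ω - Complex.I * (Real.sqrt (2 * cOf a) : ℂ) ≠ 0) :
    sqBr a ω ^ 2 = ω ^ 2 + 2 * (cOf a : ℂ) := by
  have hsq : ((Real.sqrt (2 * cOf a) : ℂ)) ^ 2 = 2 * (cOf a : ℂ) := by
    norm_cast
    rw [Real.sq_sqrt (by linarith)]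
  have hI : Complex.I ^ 2 = -1 := Complex.I_sq
  unfold sqBr
  have harg : ((1 / 2 : ℂ) * Lbr (ω + Complex.I * (Real.sqrt (2 * cOf a) : ℂ)) +
    (1 / 2 : ℂ) * Lbr (ω - Complex.I * (Real.sqrt (2 * cOf a) : ℂ))) * 2 =
    Lbr (ω + Complex.I * (Real.sqrt (2 * cOf a) : ℂ)) +
    Lbr (ω - Complex.I * (Real.sqrt (2 * cOf a) : ℂ)) := by ring
  rw [← Complex.exp_nat_mul]
  push_cast
  rw [mul_comm, harg, Complex.exp_add, exp_Lbr _ h1, exp_Lbr _ h2]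
  linear_combination hsq - ((Real.sqrt (2 * cOf a) : ℂ) ^ 2) * hI

/-- For every `ω ∈ ℂ ∖ 𝒞`, the spectral-curve identity
`G(ω)²·G(1/ω)² = -1 + G(ω)² + G(1/ω)² + (2/c)·G(ω)·G(1/ω)` holds. -/
theorem statement3 (a : ℝ) (ha0 : 0 < a) (ha1 : a < 1) (ω : ℂ) (hω : ω ∉ cuts a) :
    Gbr a ω ^ 2 * Gbr a ω⁻¹ ^ 2 =
      -1 + Gbr a ω ^ 2 + Gbr a ω⁻¹ ^ 2 + (2 / (cOf a : ℂ)) * Gbr a ω * Gbr a ω⁻¹ := by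
  have hcpos : 0 < cOf a := div_pos ha0 (by positivity)
  have hspos : 0 < Real.sqrt (2 * cOf a) := Real.sqrt_pos.mpr (by linarith)
  set sr : ℝ := Real.sqrt (2 * cOf a) with hsr
  have hI : Complex.I ^ 2 = -1 := Complex.I_sq
  have hmem : ∀ t : ℝ, (t ≤ -(1 / sr) ∨ (-sr ≤ t ∧ t ≤ sr) ∨ 1 / sr ≤ t) →
      ω ≠ Complex.I * (t : ℂ) := fun t ht h => hω ⟨t, h, ht⟩
  have hω0 : ω ≠ 0 := by
    have := hmem 0 (Or.inr (Or.inl ⟨by linarith, by linarith⟩))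
    simpa using this
  have hsrC : ((sr : ℝ) : ℂ) ≠ 0 := by exact_mod_cast hspos.ne'
  have husr : ((1/sr : ℝ) : ℂ) * ((sr : ℝ) : ℂ) = 1 := by
    rw [← Complex.ofReal_mul]
    norm_cast
    field_simp
  have h1 : ω + Complex.I * (sr : ℂ) ≠ 0 := by
    intro h
    exact hmem (-sr) (Or.inr (Or.inl ⟨le_refl _, by linarith⟩))
      (by push_cast; linear_combination h)
  have h2 : ω - Complex.I * (sr : ℂ) ≠ 0 := by
    intro h
    exact hmem sr (Or.inr (Or.inl ⟨by linarith, le_refl _⟩))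
      (by linear_combination h)
  have h3 : ω⁻¹ + Complex.I * (sr : ℂ) ≠ 0 := by
    intro h
    have hinv : ω⁻¹ = -(Complex.I * (sr : ℂ)) := by linear_combination h
    have key : (Complex.I * ((1/sr : ℝ) : ℂ)) * (-(Complex.I * (sr : ℂ))) = 1 := by
      linear_combination (-(Complex.I^2)) * husr - hI
    have : ω = Complex.I * ((1/sr : ℝ) : ℂ) := by
      rw [← inv_inv ω, hinv]
      exact (eq_inv_of_mul_eq_one_left key).symm
    exact hmem (1/sr) (Or.inr (Or.inr (le_refl _))) this
  have h4 : ω⁻¹ - Complex.I * (sr : ℂ) ≠ 0 := by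
    intro h
    have hinv : ω⁻¹ = Complex.I * (sr : ℂ) := by linear_combination h
    have key : (Complex.I * ((-(1/sr) : ℝ) : ℂ)) * (Complex.I * (sr : ℂ)) = 1 := by
      have hcast : ((-(1/sr) : ℝ) : ℂ) = -(((1/sr) : ℝ) : ℂ) := by push_cast; ring
      rw [hcast]
      linear_combination (-(Complex.I^2)) * husr - hI
    have : ω = Complex.I * ((-(1/sr) : ℝ) : ℂ) := by
      rw [← inv_inv ω, hinv]
      exact (eq_inv_of_mul_eq_one_left key).symm
    exact hmem (-(1/sr)) (Or.inl (le_refl _)) this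
  have hS := sqBr_sq a ω hcpos.le h1 h2
  have hT := sqBr_sq a ω⁻¹ hcpos.le h3 h4
  have hsq : ((sr : ℝ) : ℂ) ^ 2 = 2 * (cOf a : ℂ) := by
    norm_cast
    rw [hsr, Real.sq_sqrt (by linarith)]
  have hcne : ((cOf a : ℝ) : ℂ) ≠ 0 := by exact_mod_cast hcpos.ne'
  have hωinv : ω * ω⁻¹ = 1 := mul_inv_cancel₀ hω0
  set S := sqBr a ω with hSdef
  set T := sqBr a ω⁻¹ with hTdef
  set g := Gbr a ω with hgdef
  set h := Gbr a ω⁻¹ with hhdef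
  have hgS : (sr : ℂ) * g = ω - S := by
    rw [hgdef]; unfold Gbr; rw [← hsr, ← hSdef]
    field_simp
  have hhT : (sr : ℂ) * h = ω⁻¹ - T := by
    rw [hhdef]; unfold Gbr; rw [← hsr, ← hTdef]
    field_simp
  set c : ℂ := ((cOf a : ℝ) : ℂ) with hcdef
  have hg : c * g ^ 2 - c = ω * (sr : ℂ) * g := by
    linear_combination (1/2 : ℂ) * hS - ((S + ω - (sr:ℂ)*g)/2) * hgS - (g^2/2) * hsq
  have hh : c * h ^ 2 - c = ω⁻¹ * (sr : ℂ) * h := by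
    linear_combination (1/2 : ℂ) * hT - ((T + ω⁻¹ - (sr:ℂ)*h)/2) * hhT - (h^2/2) * hsq
  have hc2 : c ^ 2 * (2 / c * g * h) = 2 * c * (g * h) := by
    field_simp
  have hprod : (c * g ^ 2 - c) * (c * h ^ 2 - c) = (ω * (sr:ℂ) * g) * (ω⁻¹ * (sr:ℂ) * h) := by
    rw [hg, hh]
  apply mul_left_cancel₀ (pow_ne_zero 2 hcne)
  linear_combination hprod + ((sr:ℂ)^2 * (g*h)) * hωinv + (g*h) * hsq - hc2
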